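/- Let n be even and let φ be a propositional formula over variables p₁,…,p_n. Then the quantified Boolean formula ∃p₁∀p₂∃p₃⋯∃p_{n-1}∀p_n φ is true if and only if the modal formula φ_exp ∧ (◇□)^{n/2} φ is satisfied at the root of some model based on a binary tree, where φ_exp = ⋀_{i=1}^n □^{i-1}(◇□^{n-i} p_i ∧ ◇□^{n-i} p̄_i) and (◇□)^{n/2} denotes n/2 alternations of ◇ followed by □. -/

import Mathlib

namespace PoorMansModal

/-- Modal formulas over propositional variables of type `α`: variables `p`,
negated variables `p̄`, general negation, conjunction, disjunction, box, diamond,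
and the constants `true` and `false`. -/
inductive Fml (α : Type) : Type where
  | var : α → Fml α
  | nvar : α → Fml α
  | neg : Fml α → Fml α
  | and : Fml α → Fml α → Fml α
  | or : Fml α → Fml α → Fml α
  | box : Fml α → Fml α
  | dia : Fml α → Fml α
  | tru : Fml α
  | fls : Fml α

/-- A Kripke model: a nonempty set of worlds, an accessibility relation, and a valuation. -/
structure Kripke (α : Type) where
  World : Type
  nonempty : Nonempty World
  R : World → World → Prop
  V : α → World → Prop

/-- Truth of a formula at a world of a model. -/
def Sat {α : Type} (M : Kripke α) : Fml α → M.World → Prop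
  | .var p, w => M.V p w
  | .nvar p, w => ¬ M.V p w
  | .neg φ, w => ¬ Sat M φ w
  | .and φ ψ, w => Sat M φ w ∧ Sat M ψ w
  | .or φ ψ, w => Sat M φ w ∨ Sat M ψ w
  | .box φ, w => ∀ v, M.R w v → Sat M φ v
  | .dia φ, w => ∃ v, M.R w v ∧ Sat M φ v
  | .tru, _ => True
  | .fls, _ => False

/-- Modal depth: depth of nesting of `□` and `◇`. -/
def mdep {α : Type} : Fml α → ℕ
  | .var _ => 0
  | .nvar _ => 0
  | .neg φ => mdep φ
  | .and φ ψ => max (mdep φ) (mdep ψ)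
  | .or φ ψ => max (mdep φ) (mdep ψ)
  | .box φ => mdep φ + 1
  | .dia φ => mdep φ + 1
  | .tru => 0
  | .fls => 0

/-- Conjunction of a list of formulas; the empty conjunction is the always-true formula. -/
def bigConj {α : Type} : List (Fml α) → Fml α
  | [] => .tru
  | [φ] => φ
  | φ :: rest => .and φ (bigConj rest)

/-- `□^k φ`. -/
def boxI {α : Type} : ℕ → Fml α → Fml α
  | 0, φ => φ
  | k + 1, φ => .box (boxI k φ)

/-- `◇^k φ`. -/
def diaI {α : Type} : ℕ → Fml α → Fml α
  | 0, φ => φ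
  | k + 1, φ => .dia (diaI k φ)

/-- `(◇□)^k φ`. -/
def diaBoxI {α : Type} : ℕ → Fml α → Fml α
  | 0, φ => φ
  | k + 1, φ => .dia (.box (diaBoxI k φ))

/-- The literal with variable `l.1` and sign `l.2` (`true` = positive). -/
def litF {α : Type} (l : α × Bool) : Fml α := if l.2 then .var l.1 else .nvar l.1

/-- The variable `p` occurs in the formula. -/
def occursV {α : Type} (p : α) : Fml α → Prop
  | .var q => p = q
  | .nvar q => p = q
  | .neg φ => occursV p φ
  | .and φ ψ => occursV p φ ∨ occursV p ψ
  | .or φ ψ => occursV p φ ∨ occursV p ψ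
  | .box φ => occursV p φ
  | .dia φ => occursV p φ
  | .tru => False
  | .fls => False

/-- Poor man's formulas: built from literals, `∧`, `□`, `◇` only. -/
def PoorF {α : Type} : Fml α → Prop
  | .var _ => True
  | .nvar _ => True
  | .and φ ψ => PoorF φ ∧ PoorF ψ
  | .box φ => PoorF φ
  | .dia φ => PoorF φ
  | _ => False

/-- Formulas of the language `L`: built from literals, `∧`, `∨`, `□`, `◇`. -/
def InL {α : Type} : Fml α → Prop
  | .var _ => True
  | .nvar _ => True
  | .and φ ψ => InL φ ∧ InL ψ
  | .or φ ψ => InL φ ∧ InL ψ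
  | .box φ => InL φ
  | .dia φ => InL φ
  | _ => False

/-- Every world has at most one successor. -/
def AtMostOne {W : Type} (R : W → W → Prop) : Prop :=
  ∀ w v v', R w v → R w v' → v = v'

/-- Every world has at least one successor. -/
def AtLeastOne {W : Type} (R : W → W → Prop) : Prop :=
  ∀ w, ∃ v, R w v

/-- Every world has at most two successors. -/
def AtMostTwo {W : Type} (R : W → W → Prop) : Prop :=
  ∀ w v₁ v₂ v₃, R w v₁ → R w v₂ → R w v₃ → v₁ = v₂ ∨ v₁ = v₃ ∨ v₂ = v₃

/-- `chainR R n w v`: there is an `R`-path of length exactly `n` from `w` to `v`. -/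
def chainR {W : Type} (R : W → W → Prop) : ℕ → W → W → Prop
  | 0, w, v => w = v
  | k + 1, w, v => ∃ u, R w u ∧ chainR R k u v

/-- `R` is the parent-child relation of a rooted tree with root `root`
in which every node has at most two children. -/
structure IsBinTree {W : Type} (R : W → W → Prop) (root : W) : Prop where
  reach : ∀ w, Relation.ReflTransGen R root w
  root_no_parent : ∀ w, ¬ R w root
  unique_parent : ∀ w v v', R v w → R v' w → v = v'
  acyclic : ∀ w, ¬ Relation.TransGen R w w
  at_most_two_children : ∀ w v₁ v₂ v₃, R w v₁ → R w v₂ → R w v₃ → v₁ = v₂ ∨ v₁ = v₃ ∨ v₂ = v₃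

/-- `φ_exp = ⋀_{i=1}^n □^{i-1}(◇□^{n-i} p_i ∧ ◇□^{n-i} p̄_i)`, with `p_i = var i`. -/
def phiExp (n : ℕ) : Fml ℕ :=
  bigConj ((List.range n).map (fun j =>
    boxI j (.and (.dia (boxI (n - 1 - j) (.var (j + 1))))
                 (.dia (boxI (n - 1 - j) (.nvar (j + 1)))))))

/-- Satisfiability with respect to the class of all frames. -/
def SatAll (φ : Fml ℕ) : Prop := ∃ (M : Kripke ℕ) (w : M.World), Sat M φ w

/-- Satisfiability with respect to `F≤1`. -/
def SatLe1 (φ : Fml ℕ) : Prop := ∃ M : Kripke ℕ, AtMostOne M.R ∧ ∃ w, Sat M φ w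

/-- Satisfiability with respect to `F≥1`. -/
def SatGe1 (φ : Fml ℕ) : Prop := ∃ M : Kripke ℕ, AtLeastOne M.R ∧ ∃ w, Sat M φ w

/-- Satisfiability with respect to `F≤2`. -/
def SatLe2 (φ : Fml ℕ) : Prop := ∃ M : Kripke ℕ, AtMostTwo M.R ∧ ∃ w, Sat M φ w

/-- A one-world model with no successors, realizing the boolean assignment `v`;
truth at its world is propositional truth for formulas without modal operators. -/
def propModel (v : ℕ → Bool) : Kripke ℕ :=
  { World := Unit, nonempty := ⟨()⟩, R := fun _ _ => False, V := fun p _ => v p = true }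

/-- Propositional satisfaction of `φ` under the assignment `v`. -/
def PropSat (v : ℕ → Bool) (φ : Fml ℕ) : Prop := Sat (propModel v) φ ()


/-- Propositional formulas: no modal operators (and no general negation or constants). -/
def IsProp : Fml ℕ → Prop
  | .var _ => True
  | .nvar _ => True
  | .and φ ψ => IsProp φ ∧ IsProp ψ
  | .or φ ψ => IsProp φ ∧ IsProp ψ
  | _ => False

/-- `qbfTrue φ i k v`: truth of the quantified Boolean formula with `k` remaining
alternating quantifiers over the variables `i, i+1, …, i+k-1` (existential at odd
indices, universal at even indices), with matrix `φ`, under the current assignment `v`.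
Starting it as `qbfTrue φ 1 n v` gives the truth of `∃p₁ ∀p₂ ∃p₃ ⋯ ∀p_n φ` for even `n`. -/
def qbfTrue (φ : Fml ℕ) : ℕ → ℕ → (ℕ → Bool) → Prop
  | _, 0, v => PropSat v φ
  | i, k + 1, v =>
      if i % 2 = 1 then ∃ b, qbfTrue φ (i + 1) k (Function.update v i b)
      else ∀ b, qbfTrue φ (i + 1) k (Function.update v i b)


section Helpers

variable {α : Type}

theorem sat_bigConj {M : Kripke α} {L : List (Fml α)} {w : M.World} :
    Sat M (bigConj L) w ↔ ∀ ψ ∈ L, Sat M ψ w := by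
  induction L with
  | nil => simp [bigConj, Sat]
  | cons ψ rest ih =>
    cases rest with
    | nil => simp [bigConj]
    | cons χ rest' =>
      simp only [bigConj, Sat] at *
      constructor
      · rintro ⟨h1, h2⟩ τ hτ
        rcases List.mem_cons.1 hτ with h | h
        · exact h ▸ h1
        · exact ih.1 h2 τ h
      · intro h
        exact ⟨h ψ List.mem_cons_self, ih.2 fun τ hτ => h τ (List.mem_cons_of_mem _ hτ)⟩

theorem chainR_cons {W : Type} {R : W → W → Prop} {k : ℕ} {w u t : W}
    (h : R w u) (h' : chainR R k u t) : chainR R (k+1) w t := ⟨u, h, h'⟩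

theorem chainR_snoc {W : Type} {R : W → W → Prop} : ∀ {k : ℕ} {w u t : W},
    chainR R k w u → R u t → chainR R (k+1) w t := by
  intro k
  induction k with
  | zero => intro w u t h h'; cases h; exact ⟨t, h', rfl⟩
  | succ k ih =>
    rintro w u t ⟨x, hx, hc⟩ h'
    exact ⟨x, hx, ih hc h'⟩

theorem chainR_reflTransGen {W : Type} {R : W → W → Prop} : ∀ {k : ℕ} {w t : W},
    chainR R k w t → Relation.ReflTransGen R w t := by
  intro k
  induction k with
  | zero => intro w t h; cases h; rfl
  | succ k ih =>
    rintro w t ⟨u, hu, hc⟩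
    exact Relation.ReflTransGen.head hu (ih hc)

theorem sat_boxI {M : Kripke α} : ∀ (k : ℕ) (φ : Fml α) (w : M.World),
    Sat M (boxI k φ) w ↔ ∀ v, chainR M.R k w v → Sat M φ v := by
  intro k
  induction k with
  | zero =>
    intro φ w
    constructor
    · intro h v hv; cases hv; exact h
    · intro h; exact h w rfl
  | succ k ih =>
    intro φ w
    constructor
    · rintro h v ⟨u, hu, hc⟩
      exact (ih φ u).1 (h u hu) v hc
    · intro h u hu
      exact (ih φ u).2 fun v hv => h v ⟨u, hu, hv⟩

theorem sat_prop_iff {M : Kripke ℕ} {w : M.World} {v : ℕ → Bool} :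
    ∀ {φ : Fml ℕ}, IsProp φ → (∀ p, occursV p φ → (M.V p w ↔ v p = true)) →
    (Sat M φ w ↔ PropSat v φ) := by
  intro φ
  induction φ with
  | var p => intro _ h; simpa [Sat, PropSat, propModel] using h p rfl
  | nvar p =>
    intro _ h
    simp only [Sat, PropSat, propModel]
    exact not_congr (h p rfl)
  | and φ ψ ihφ ihψ =>
    rintro ⟨h1, h2⟩ h
    simp only [Sat, PropSat, propModel] at *
    rw [ihφ h1 (fun p hp => h p (Or.inl hp)), ihψ h2 (fun p hp => h p (Or.inr hp))]
  | or φ ψ ihφ ihψ =>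
    rintro ⟨h1, h2⟩ h
    simp only [Sat, PropSat, propModel] at *
    rw [ihφ h1 (fun p hp => h p (Or.inl hp)), ihψ h2 (fun p hp => h p (Or.inr hp))]
  | neg φ ih => intro h; exact h.elim
  | box φ ih => intro h; exact h.elim
  | dia φ ih => intro h; exact h.elim
  | tru => intro h; exact h.elim
  | fls => intro h; exact h.elim

end Helpers

/-! ### The concrete binary-tree model -/

/-- The complete binary tree of depth `n`: worlds are bit-lists of length at most `n`. -/
def treeM (n : ℕ) : Kripke ℕ where
  World := {l : List Bool // l.length ≤ n}
  nonempty := ⟨⟨[], by simp⟩⟩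
  R w v := ∃ b, v.val = w.val ++ [b]
  V p w := w.val.getD (p-1) false = true

def treeRoot (n : ℕ) : (treeM n).World := ⟨[], by simp⟩

theorem treeChain {n : ℕ} : ∀ {k : ℕ} {w t : (treeM n).World},
    chainR (treeM n).R k w t → ∃ s : List Bool, s.length = k ∧ t.val = w.val ++ s := by
  intro k
  induction k with
  | zero => intro w t h; cases h; exact ⟨[], rfl, by simp⟩
  | succ k ih =>
    rintro w t ⟨u, ⟨b, hb⟩, hc⟩
    obtain ⟨s, hs, ht⟩ := ih hc
    exact ⟨b :: s, by simp [hs], by simp [ht, hb]⟩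

theorem treeChainEx {n : ℕ} : ∀ (s : List Bool) (w : (treeM n).World),
    w.val.length + s.length ≤ n →
    ∃ t : (treeM n).World, chainR (treeM n).R s.length w t ∧ t.val = w.val ++ s := by
  intro s
  induction s with
  | nil => intro w h; exact ⟨w, rfl, by simp⟩
  | cons b s ih =>
    intro w h
    have hlen : (w.val ++ [b]).length ≤ n := by simp at h ⊢; omega
    obtain ⟨t, hc, ht⟩ := ih ⟨w.val ++ [b], hlen⟩ (by simp at h ⊢; omega)
    exact ⟨t, ⟨⟨w.val ++ [b], hlen⟩, ⟨b, rfl⟩, hc⟩, by simp [ht]⟩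

theorem treeBinTree (n : ℕ) : IsBinTree (treeM n).R (treeRoot n) := by
  have hlen : ∀ {w v : (treeM n).World}, (treeM n).R w v → v.val.length = w.val.length + 1 := by
    rintro w v ⟨b, hb⟩; simp [hb]
  constructor
  · intro w
    obtain ⟨t, hc, ht⟩ := treeChainEx (n := n) w.val (treeRoot n) (by simpa [treeRoot] using w.2)
    have : t = w := Subtype.ext (by simpa [treeRoot] using ht)
    exact this ▸ chainR_reflTransGen hc
  · rintro w ⟨b, hb⟩
    simp [treeRoot] at hb
  · rintro w v v' ⟨b, hb⟩ ⟨b', hb'⟩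
    have h := hb.symm.trans hb'
    exact Subtype.ext (List.append_inj' h (by simp)).1
  · intro w h
    have : ∀ {a b : (treeM n).World}, Relation.TransGen (treeM n).R a b →
        a.val.length < b.val.length := by
      intro a b h
      induction h with
      | single h => simp [hlen h]
      | tail _ h ih => have := hlen h; omega
    exact absurd (this h) (lt_irrefl _)
  · rintro w v₁ v₂ v₃ ⟨b₁, h₁⟩ ⟨b₂, h₂⟩ ⟨b₃, h₃⟩
    have e : ∀ {b b' : Bool} {x y : (treeM n).World}, x.val = w.val ++ [b] →
        y.val = w.val ++ [b'] → b = b' → x = y := by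
      rintro b b' x y hx hy rfl; exact Subtype.ext (hx.trans hy.symm)
    cases b₁ <;> cases b₂ <;> cases b₃
    · exact Or.inl (e h₁ h₂ rfl)
    · exact Or.inl (e h₁ h₂ rfl)
    · exact Or.inr (Or.inl (e h₁ h₃ rfl))
    · exact Or.inr (Or.inr (e h₂ h₃ rfl))
    · exact Or.inr (Or.inr (e h₂ h₃ rfl))
    · exact Or.inr (Or.inl (e h₁ h₃ rfl))
    · exact Or.inl (e h₁ h₂ rfl)
    · exact Or.inl (e h₁ h₂ rfl)

theorem treeExp (n : ℕ) : Sat (treeM n) (phiExp n) (treeRoot n) := by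
  rw [phiExp, sat_bigConj]
  intro ψ hψ
  simp only [List.mem_map, List.mem_range] at hψ
  obtain ⟨j, hj, rfl⟩ := hψ
  rw [sat_boxI]
  intro u hu
  obtain ⟨s, hs, husval⟩ := treeChain hu
  have hulen : u.val.length = j := by simp [husval, treeRoot, hs]
  have key : ∀ b : Bool, ∃ c, (treeM n).R u c ∧
      Sat (treeM n) (boxI (n - 1 - j) (if b then Fml.var (j+1) else Fml.nvar (j+1))) c := by
    intro b
    have hclen : (u.val ++ [b]).length ≤ n := by simp [hulen]; omega
    refine ⟨⟨u.val ++ [b], hclen⟩, ⟨b, rfl⟩, ?_⟩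
    refine (sat_boxI _ _ _).2 ?_
    intro t ht
    obtain ⟨s', hs', htval⟩ := treeChain ht
    have hgd : t.val.getD j false = b := by
      rw [htval, List.getD_append _ _ _ _ (by simp [hulen]),
        List.getD_append_right _ _ _ _ (by simp [hulen])]
      simp [hulen]
    cases b
    · show ¬ (treeM n).V (j+1) t
      show ¬ (t.val.getD (j+1-1) false = true)
      simp only [Nat.add_sub_cancel, hgd]
      simp
    · show (treeM n).V (j+1) t
      show t.val.getD (j+1-1) false = true
      simp only [Nat.add_sub_cancel, hgd]
  obtain ⟨c₁, hc₁, hs₁⟩ := key true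
  obtain ⟨c₀, hc₀, hs₀⟩ := key false
  exact ⟨⟨c₁, hc₁, hs₁⟩, ⟨c₀, hc₀, hs₀⟩⟩

theorem fwd (n : ℕ) (hn : n % 2 = 0) (φ : Fml ℕ) (hφ : IsProp φ)
    (hvars : ∀ p, occursV p φ → 1 ≤ p ∧ p ≤ n) :
    ∀ (k j : ℕ) (w : (treeM n).World) (v : ℕ → Bool), j + 2*k = n → w.val.length = j →
    (∀ i, 1 ≤ i → i ≤ j → w.val.getD (i-1) false = v i) →
    qbfTrue φ (j+1) (2*k) v → Sat (treeM n) (diaBoxI k φ) w := by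
  intro k
  induction k with
  | zero =>
    intro j w v hj hw hv hq
    have hq' : PropSat v φ := hq
    refine (sat_prop_iff hφ ?_).2 hq'
    intro p hp
    obtain ⟨h1, h2⟩ := hvars p hp
    show w.val.getD (p-1) false = true ↔ v p = true
    rw [hv p h1 (by omega)]
  | succ k ih =>
    intro j w v hj hw hv hq
    rw [show 2*(k+1) = (2*k+1)+1 by ring] at hq
    rw [qbfTrue, if_pos (by omega)] at hq
    obtain ⟨b, hq⟩ := hq
    rw [qbfTrue, if_neg (by omega)] at hq
    have hw1len : (w.val ++ [b]).length ≤ n := by simp [hw]; omega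
    refine ⟨⟨w.val ++ [b], hw1len⟩, ⟨b, rfl⟩, ?_⟩
    rintro c ⟨b₂, hb₂⟩
    have hclen : c.val.length = j + 2 := by simp [hb₂, hw]
    refine ih (j+2) c (Function.update (Function.update v (j+1) b) (j+2) b₂)
      (by omega) hclen ?_ ?_
    · intro i h1 h2
      rcases Nat.lt_or_ge i (j+1) with hi | hi
      · rw [Function.update_of_ne (by omega), Function.update_of_ne (by omega)]
        rw [← hv i h1 (by omega), hb₂,
          List.getD_append _ _ _ _ (by simp [hw]; omega),
          List.getD_append _ _ _ _ (by simp [hw]; omega)]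
      · rcases Nat.lt_or_ge i (j+2) with hi2 | hi2
        · have : i = j + 1 := by omega
          subst this
          rw [Function.update_of_ne (by omega), Function.update_self]
          rw [hb₂, List.getD_append _ _ _ _ (by simp [hw]),
            List.getD_append_right _ _ _ _ (by simp [hw]),
            show j + 1 - 1 - w.val.length = 0 by simp [hw]]
          rfl
        · have : i = j + 2 := by omega
          subst this
          rw [Function.update_self]
          rw [hb₂, List.getD_append_right _ _ _ _ (by simp [hw])]
          simp [hw]
    · have : j + 3 = (j + 2) + 1 := by ring
      rw [this] at hq
      exact hq b₂

/-! ### The backward direction -/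

theorem bwd (n : ℕ) (hn : n % 2 = 0) (φ : Fml ℕ) (hφ : IsProp φ)
    (hvars : ∀ p, occursV p φ → 1 ≤ p ∧ p ≤ n)
    (M : Kripke ℕ) (r : M.World) (hbt : IsBinTree M.R r)
    (Hexp : ∀ j, j < n → ∀ u, chainR M.R j r u → ∀ b : Bool,
      ∃ c, M.R u c ∧ ∀ t, chainR M.R (n-1-j) c t → (M.V (j+1) t ↔ b = true)) :
    ∀ (k j : ℕ) (w : M.World) (v : ℕ → Bool), j + 2*k = n → chainR M.R j r w →
    (∀ i, 1 ≤ i → i ≤ j → ∀ t, chainR M.R (2*k) w t → (M.V i t ↔ v i = true)) →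
    Sat M (diaBoxI k φ) w → qbfTrue φ (j+1) (2*k) v := by
  have chainEx : ∀ (m j : ℕ) (u : M.World), chainR M.R j r u → j + m ≤ n →
      ∃ t, chainR M.R m u t := by
    intro m
    induction m with
    | zero => intro j u _ _; exact ⟨u, rfl⟩
    | succ m ih =>
      intro j u hu hjm
      obtain ⟨c, hc, -⟩ := Hexp j (by omega) u hu true
      obtain ⟨t, ht⟩ := ih (j+1) c (chainR_snoc hu hc) (by omega)
      exact ⟨t, c, hc, ht⟩
  intro k
  induction k with
  | zero =>
    intro j w v hj hw hv hs
    show PropSat v φ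
    refine (sat_prop_iff hφ ?_).1 hs
    intro p hp
    obtain ⟨h1, h2⟩ := hvars p hp
    exact hv p h1 (by omega) w rfl
  | succ k ih =>
    intro j w v hj hw hv hs
    obtain ⟨w₁, hww₁, hbox⟩ := hs
    -- the two committed children of w
    obtain ⟨cT, hcT, hcomT⟩ := Hexp j (by omega) w hw true
    obtain ⟨cF, hcF, hcomF⟩ := Hexp j (by omega) w hw false
    have hn1j : n - 1 - j = 2*k + 1 := by omega
    rw [hn1j] at hcomT hcomF
    have hne : cT ≠ cF := by
      intro h
      obtain ⟨t, ht⟩ := chainEx (2*k+1) (j+1) cT (chainR_snoc hw hcT) (by omega)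
      have h1 := (hcomT t ht).2 rfl
      have h2 := (hcomF t (h ▸ ht)).1 h1
      simp at h2
    have hcases := hbt.at_most_two_children w w₁ cT cF hww₁ hcT hcF
    have hb : ∃ b : Bool, ∀ t, chainR M.R (2*k+1) w₁ t → (M.V (j+1) t ↔ b = true) := by
      rcases hcases with h | h | h
      · exact ⟨true, h ▸ hcomT⟩
      · exact ⟨false, h ▸ hcomF⟩
      · exact absurd h hne
    obtain ⟨b, hw₁com⟩ := hb
    rw [show 2*(k+1) = (2*k+1)+1 by ring, qbfTrue, if_pos (by omega)]
    refine ⟨b, ?_⟩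
    rw [qbfTrue, if_neg (by omega)]
    intro b₂
    obtain ⟨c₂, hc₂, hcom₂⟩ := Hexp (j+1) (by omega) w₁ (chainR_snoc hw hww₁) b₂
    have hn2j : n - 1 - (j+1) = 2*k := by omega
    rw [hn2j] at hcom₂
    have goal := ih (j+2) c₂
      (Function.update (Function.update v (j+1) b) (j+2) b₂)
      (by omega) (chainR_snoc (chainR_snoc hw hww₁) hc₂) ?_ (hbox c₂ hc₂)
    · rw [show j + 3 = (j+2)+1 by ring]
      exact goal
    · intro i h1 h2 t ht
      rcases Nat.lt_or_ge i (j+1) with hi | hi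
      · rw [Function.update_of_ne (by omega), Function.update_of_ne (by omega)]
        exact hv i h1 (by omega) t
          (by rw [show 2*(k+1) = (2*k)+1+1 by ring]
              exact chainR_cons hww₁ (chainR_cons hc₂ ht))
      · rcases Nat.lt_or_ge i (j+2) with hi2 | hi2
        · have : i = j + 1 := by omega
          subst this
          rw [Function.update_of_ne (by omega), Function.update_self]
          exact hw₁com t (chainR_cons hc₂ ht)
        · have : i = j + 2 := by omega
          subst this
          rw [Function.update_self]
          exact hcom₂ t ht


/-- For even `n` and a propositional formula `φ` over `p₁, …, p_n`, the
quantified Boolean formula `∃p₁ ∀p₂ ⋯ ∃p_{n-1} ∀p_n φ` is true iff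
`φ_exp ∧ (◇□)^{n/2} φ` is satisfied at the root of some model based on a binary tree. -/
theorem stmt12 (n : ℕ) (hn : Even n) (φ : Fml ℕ) (hφ : IsProp φ)
    (hvars : ∀ p, occursV p φ → 1 ≤ p ∧ p ≤ n) :
    qbfTrue φ 1 n (fun _ => false) ↔
      ∃ (M : Kripke ℕ) (r : M.World), IsBinTree M.R r ∧
        Sat M (.and (phiExp n) (diaBoxI (n / 2) φ)) r := by
  obtain ⟨m, hm⟩ := hn
  have hn' : n % 2 = 0 := by omega
  constructor
  · intro h
    refine ⟨treeM n, treeRoot n, treeBinTree n, treeExp n, ?_⟩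
    have h' : qbfTrue φ (0+1) (2*m) (fun _ => false) := by
      rw [show 2*m = n by omega]; exact h
    have := fwd n hn' φ hφ hvars m 0 (treeRoot n) (fun _ => false)
      (by omega) (by simp [treeRoot]) (by intro i h1 h2; omega) h'
    rwa [show n / 2 = m by omega]
  · rintro ⟨M, r, hbt, hexp, hdb⟩
    have Hexp : ∀ j, j < n → ∀ u, chainR M.R j r u → ∀ b : Bool,
        ∃ c, M.R u c ∧ ∀ t, chainR M.R (n-1-j) c t → (M.V (j+1) t ↔ b = true) := by
      intro j hj u hu b
      have hmem : boxI j (.and (.dia (boxI (n - 1 - j) (.var (j + 1))))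
          (.dia (boxI (n - 1 - j) (.nvar (j + 1)))))
          ∈ (List.range n).map (fun j => boxI j (.and (.dia (boxI (n - 1 - j) (.var (j + 1))))
              (.dia (boxI (n - 1 - j) (.nvar (j + 1)))))) :=
        List.mem_map.2 ⟨j, List.mem_range.2 hj, rfl⟩
      have hsat := sat_bigConj.1 hexp _ hmem
      rw [sat_boxI] at hsat
      obtain ⟨hpos, hneg⟩ := hsat u hu
      cases b
      · obtain ⟨c, hc, hcs⟩ := hneg
        rw [sat_boxI] at hcs
        refine ⟨c, hc, fun t ht => ?_⟩
        have := hcs t ht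
        simp only [Sat] at this
        simp [this]
      · obtain ⟨c, hc, hcs⟩ := hpos
        rw [sat_boxI] at hcs
        refine ⟨c, hc, fun t ht => ?_⟩
        have := hcs t ht
        simp only [Sat] at this
        simp [this]
    have hdb' : Sat M (diaBoxI m φ) r := by rwa [show n / 2 = m by omega] at hdb
    have := bwd n hn' φ hφ hvars M r hbt Hexp m 0 r (fun _ => false)
      (by omega) rfl (by intro i h1 h2; omega) hdb'
    rwa [show (0:ℕ)+1 = 1 by rfl, show 2*m = n by omega] at this


end PoorMansModal
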